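/- Let n ≥ 2 be a natural number, let f ≥ 4 be a real number, and let t = ⌈f·n·log n⌉. If X is a binomial random variable with t trials and success probability 2/n, then Pr[X ≥ 6·f·log n] ≤ n^(−f). -/

import Mathlib

open scoped ENNReal

theorem sum_binomial_two (p : NNReal) (hp : p ≤ 1) (t : ℕ) :
    ∑ i : Fin (t+1), PMF.binomial p hp t i * 2^(i:ℕ) = (1 + (p:ℝ≥0∞))^t := by
  have h : ∀ i : Fin (t+1), PMF.binomial p hp t i * 2^(i:ℕ)
      = (2*(p:ℝ≥0∞))^(i:ℕ) * (1-(p:ℝ≥0∞))^(t - (i:ℕ)) * (t.choose i) := by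
    intro i; rw [PMF.binomial_apply, mul_pow, Fin.val_last]; push_cast; ring
  rw [Finset.sum_congr rfl (fun i _ => h i)]
  have hq : 2*(p:ℝ≥0∞) + (1-(p:ℝ≥0∞)) = 1 + (p:ℝ≥0∞) := by
    rw [two_mul, add_assoc, add_tsub_cancel_of_le (by exact_mod_cast hp), add_comm]
  rw [← hq, add_pow, Finset.sum_fin_eq_sum_range]
  apply Finset.sum_congr rfl
  intro i hi
  rw [Finset.mem_range] at hi
  rw [dif_pos hi]

/-- Markov-type tail bound for the binomial distribution, via the moment
generating function with base `2`. -/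
theorem binomial_tail (p : NNReal) (hp : p ≤ 1) (t : ℕ) (a : ℝ) :
    (PMF.binomial p hp t).toMeasure {k : Fin (t+1) | a ≤ (k : ℝ)}
      ≤ (2:ℝ≥0∞)^(-a) * (1+(p:ℝ≥0∞))^t := by
  rw [PMF.toMeasure_apply_fintype]
  have key : ∀ x : Fin (t+1),
      Set.indicator {k : Fin (t+1) | a ≤ (k : ℝ)} (PMF.binomial p hp t) x
        ≤ (2:ℝ≥0∞)^(-a) * (PMF.binomial p hp t x * 2^(x:ℕ)) := by
    intro x
    by_cases hx : x ∈ {k : Fin (t+1) | a ≤ (k : ℝ)}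
    · rw [Set.indicator_of_mem hx]
      have h2 : (1:ℝ≥0∞) ≤ (2:ℝ≥0∞)^(-a) * 2^((x:ℕ):ℝ) := by
        rw [← ENNReal.rpow_add _ _ (by norm_num) (by norm_num)]
        calc (1:ℝ≥0∞) = (2:ℝ≥0∞)^(0:ℝ) := by rw [ENNReal.rpow_zero]
        _ ≤ (2:ℝ≥0∞)^(-a + (x:ℕ)) := by
            apply ENNReal.rpow_le_rpow_of_exponent_le (by norm_num)
            have := hx; simp only [Set.mem_setOf_eq] at this; linarith
      calc PMF.binomial p hp t x = 1 * PMF.binomial p hp t x := (one_mul _).symm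
      _ ≤ ((2:ℝ≥0∞)^(-a) * 2^((x:ℕ):ℝ)) * PMF.binomial p hp t x :=
          mul_le_mul_left h2 _
      _ = (2:ℝ≥0∞)^(-a) * (PMF.binomial p hp t x * 2^(x:ℕ)) := by
          rw [ENNReal.rpow_natCast]; ring
    · rw [Set.indicator_of_notMem hx]; exact zero_le
  calc ∑ x, Set.indicator {k : Fin (t+1) | a ≤ (k : ℝ)} (PMF.binomial p hp t) x
      ≤ ∑ x, (2:ℝ≥0∞)^(-a) * (PMF.binomial p hp t x * 2^(x:ℕ)) :=
        Finset.sum_le_sum fun x _ => key x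
    _ = (2:ℝ≥0∞)^(-a) * ∑ x, PMF.binomial p hp t x * 2^(x:ℕ) := by
        rw [Finset.mul_sum]
    _ = (2:ℝ≥0∞)^(-a) * (1+(p:ℝ≥0∞))^t := by rw [sum_binomial_two]

/-- The purely real-analytic numeric inequality. -/
theorem real_bound (n : ℕ) (f : ℝ) (hn : 2 ≤ n) (hf : 4 ≤ f) (t : ℕ)
    (ht' : (t:ℝ) ≤ f*(n:ℝ)*Real.log n + 1) :
    (2:ℝ)^(-(6*f*Real.log n)) * (1 + 2/(n:ℝ))^t ≤ (n:ℝ)^(-f) := by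
  set L := Real.log n with hLdef
  have hl2 : (0.6931471803:ℝ) < Real.log 2 := Real.log_two_gt_d9
  have hn2 : (2:ℝ) ≤ n := by exact_mod_cast hn
  have hn0 : (0:ℝ) < n := by linarith
  have hL : Real.log 2 ≤ L := Real.log_le_log two_pos hn2
  have hL0 : (0:ℝ) < L := by linarith
  have step1 : (1 + 2/(n:ℝ))^t ≤ Real.exp ((2/n) * t) := by
    have a1 : (1:ℝ)+2/n ≤ Real.exp (2/n) := by
      have := Real.add_one_le_exp (2/(n:ℝ)); linarith
    calc (1+2/(n:ℝ))^t ≤ (Real.exp (2/n))^t :=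
          pow_le_pow_left₀ (by positivity) a1 t
      _ = Real.exp ((2/n)*t) := by rw [← Real.exp_nat_mul, mul_comm]
  have step2 : (2:ℝ)^(-(6*f*L)) = Real.exp (Real.log 2 * -(6*f*L)) := by
    rw [Real.rpow_def_of_pos two_pos]
  have step3 : (n:ℝ)^(-f) = Real.exp (L * -f) := by
    rw [Real.rpow_def_of_pos hn0]
  have h4 : (2/(n:ℝ))*t ≤ 2*f*L + 1 := by
    have hm : (2/(n:ℝ)) * t ≤ (2/n) * (f*n*L+1) :=
      mul_le_mul_of_nonneg_left ht' (by positivity)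
    have hinv : (2/(n:ℝ)) * (f*n*L+1) = 2*f*L + 2/n := by field_simp
    have hd1 : 2/(n:ℝ) ≤ 1 := by rw [div_le_one hn0]; linarith
    linarith
  have hexp : Real.log 2 * -(6*f*L) + (2/n)*t ≤ L * -f := by
    have key : 1 ≤ f*L*(6*Real.log 2 - 3) := by
      nlinarith [mul_nonneg (sub_nonneg.2 hf) hL0.le,
        mul_nonneg (sub_nonneg.2 hL) (by linarith : (0:ℝ) ≤ 6*Real.log 2 - 3),
        mul_nonneg (sub_nonneg.2 hf) (sub_nonneg.2 hL)]
    nlinarith [h4]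
  calc (2:ℝ)^(-(6*f*L)) * (1 + 2/(n:ℝ))^t
      ≤ Real.exp (Real.log 2 * -(6*f*L)) * Real.exp ((2/n)*t) := by
        rw [step2]; exact mul_le_mul_of_nonneg_left step1 (Real.exp_pos _).le
    _ = Real.exp (Real.log 2 * -(6*f*L) + (2/n)*t) := (Real.exp_add _ _).symm
    _ ≤ Real.exp (L * -f) := Real.exp_le_exp.mpr hexp
    _ = (n:ℝ)^(-f) := step3.symm

theorem ennreal_eq_ofReal (n : ℕ) (hn : 2 ≤ n) (a : ℝ) (t : ℕ) :
    (2:ℝ≥0∞)^(-a) * (1 + 2/(n:ℝ≥0∞))^t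
      = ENNReal.ofReal ((2:ℝ)^(-a) * (1 + 2/(n:ℝ))^t) := by
  have hn0 : (0:ℝ) < n := by exact_mod_cast Nat.lt_of_lt_of_le two_pos hn
  have hpeq : (2:ℝ≥0∞)/(n:ℝ≥0∞) = ENNReal.ofReal (2/(n:ℝ)) := by
    rw [ENNReal.ofReal_div_of_pos hn0, ENNReal.ofReal_ofNat, ENNReal.ofReal_natCast]
  have h2 : (2:ℝ≥0∞) = ENNReal.ofReal 2 := by norm_num
  rw [hpeq, ← ENNReal.ofReal_one, ← ENNReal.ofReal_add (by norm_num) (by positivity),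
    ← ENNReal.ofReal_pow (by positivity), h2, ENNReal.ofReal_rpow_of_pos two_pos,
    ← ENNReal.ofReal_mul (by positivity)]

/-- Chernoff-bound core of Lemma D.5: if `X ~ Bin(⌈f·n·log n⌉, 2/n)` with `n ≥ 2`
and `f ≥ 4`, then `Pr[X ≥ 6·f·log n] ≤ n^(−f)`. -/
theorem sleep_phase_chernoff (n : ℕ) (f : ℝ) (hn : 2 ≤ n) (hf : 4 ≤ f)
    (hp : (2 : ℝ≥0∞) / n ≤ 1) :
    (PMF.binomial ((2 : ℝ≥0∞) / n).toNNReal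
      (le_of_le_of_eq (ENNReal.toNNReal_mono ENNReal.one_ne_top hp) ENNReal.toNNReal_one) ⌈f * n * Real.log n⌉₊).toMeasure
        {k : Fin (⌈f * n * Real.log n⌉₊ + 1) | 6 * f * Real.log n ≤ (k : ℝ)} ≤
      ENNReal.ofReal ((n : ℝ) ^ (-f)) := by
  have hl2 : (0.6931471803:ℝ) < Real.log 2 := Real.log_two_gt_d9
  have hn2 : (2:ℝ) ≤ n := by exact_mod_cast hn
  have hL : Real.log 2 ≤ Real.log n := Real.log_le_log two_pos hn2
  have hfnL : 0 ≤ f*(n:ℝ)*Real.log n := by positivity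
  have ht' : ((⌈f * n * Real.log n⌉₊ : ℕ):ℝ) ≤ f*(n:ℝ)*Real.log n + 1 :=
    (Nat.ceil_lt_add_one hfnL).le
  have hco : ((((2:ℝ≥0∞) / n).toNNReal : NNReal) : ℝ≥0∞) = 2 / n :=
    ENNReal.coe_toNNReal (ne_top_of_le_ne_top ENNReal.one_ne_top hp)
  calc _
      ≤ (2:ℝ≥0∞)^(-(6 * f * Real.log n)) * (1 + 2/(n:ℝ≥0∞))^⌈f * n * Real.log n⌉₊ :=
        le_of_le_of_eq (binomial_tail _ _ _ _) (by rw [hco])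
    _ = ENNReal.ofReal ((2:ℝ)^(-(6 * f * Real.log n))
          * (1 + 2/(n:ℝ))^⌈f * n * Real.log n⌉₊) :=
        ennreal_eq_ofReal n hn _ _
    _ ≤ ENNReal.ofReal ((n : ℝ) ^ (-f)) :=
        ENNReal.ofReal_le_ofReal (real_bound n f hn hf _ ht')
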